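/- Let V ⊆ ℝ be an open interval, G : V → ℝ strictly convex and differentiable with derivative g = G′, and f the inverse of g defined on the range of g. Fix N ∈ ℕ and for i = 1,…,N let δ_i ∈ {0,1}, q_i > 0 and z_i ∈ ℝ^d. Suppose λ̂ ∈ ℝ^d is such that q_i λ̂ᵀ z_i lies in the range of g for every i with δ_i = 1 and λ̂ solves the calibration equation Σ_{i=1}^N δ_i f(q_i λ̂ᵀ z_i) z_i = Σ_{i=1}^N z_i; set ω̂_i = f(q_i λ̂ᵀ z_i). Then for every ω ∈ ℝ^N with ω_i ∈ V for all i with δ_i = 1 and Σ_{i=1}^N δ_i ω_i z_i = Σ_{i=1}^N z_i, it holds that Σ_{i=1}^N δ_i G(ω_i) q_i^{-1} ≥ Σ_{i=1}^N δ_i G(ω̂_i) q_i^{-1}, with equality if and only if ω_i = ω̂_i for every i with δ_i = 1. Hence the dual stationary point yields the unique solution of the primal generalized entropy calibration problem. -/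

import Mathlib

open Matrix Finset

/-- Tangent line inequality for strictly convex differentiable functions. -/
lemma tangent_lt {V : Set ℝ} {G : ℝ → ℝ} {g : ℝ → ℝ}
    (hconv : StrictConvexOn ℝ V G) (hderiv : ∀ ω ∈ V, HasDerivAt G (g ω) ω)
    {a b : ℝ} (ha : a ∈ V) (hb : b ∈ V) (hne : b ≠ a) :
    G a + g a * (b - a) < G b := by
  rcases lt_or_gt_of_ne hne with h | h
  · -- b < a, use slope_lt
    have hs := hconv.slope_lt_of_hasDerivAt hb ha h (hderiv a ha)
    rw [slope_def_field, div_lt_iff₀ (by linarith : (0:ℝ) < a - b)] at hs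
    linarith
  · -- a < b
    have hs := hconv.lt_slope_of_hasDerivAt ha hb h (hderiv a ha)
    rw [slope_def_field, lt_div_iff₀ (by linarith : (0:ℝ) < b - a)] at hs
    linarith

/-- A dual stationary point yields the unique solution of the primal
generalized entropy calibration problem: the weights
`ω̂_i = f(q_i λ̂ᵀz_i)` (with `f = g⁻¹`) satisfying the calibration equation
minimize `Σ δ_i G(ω_i) q_i⁻¹` among calibrated weights with entries in `V`,
uniquely on respondents. -/
theorem stmt_6 (N d : ℕ) (V : Set ℝ) (hVopen : IsOpen V) (hVconn : V.OrdConnected)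
    (G g f : ℝ → ℝ) (hconv : StrictConvexOn ℝ V G)
    (hderiv : ∀ ω ∈ V, HasDerivAt G (g ω) ω)
    (hfinv : ∀ ω ∈ V, f (g ω) = ω)
    (δ q : Fin N → ℝ) (hδ : ∀ i, δ i = 0 ∨ δ i = 1) (hq : ∀ i, 0 < q i)
    (z : Fin N → Fin d → ℝ) (lam : Fin d → ℝ)
    (hrange : ∀ i, δ i = 1 → ∃ ω ∈ V, g ω = q i * (lam ⬝ᵥ z i))
    (ωhat : Fin N → ℝ) (hωhat : ∀ i, ωhat i = f (q i * (lam ⬝ᵥ z i)))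
    (hcal : ∑ i, (δ i * ωhat i) • z i = ∑ i, z i) :
    ∀ ω : Fin N → ℝ, (∀ i, δ i = 1 → ω i ∈ V) →
      (∑ i, (δ i * ω i) • z i = ∑ i, z i) →
      (∑ i, δ i * G (ω i) * (q i)⁻¹ ≥ ∑ i, δ i * G (ωhat i) * (q i)⁻¹ ∧
       (∑ i, δ i * G (ω i) * (q i)⁻¹ = ∑ i, δ i * G (ωhat i) * (q i)⁻¹ ↔
        ∀ i, δ i = 1 → ω i = ωhat i)) := by
  intro ω hωV hcalω
  -- ωhat properties on respondents
  have hhat : ∀ i, δ i = 1 → ωhat i ∈ V ∧ g (ωhat i) = q i * (lam ⬝ᵥ z i) := by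
    intro i hi
    obtain ⟨w, hwV, hgw⟩ := hrange i hi
    have hw : ωhat i = w := by rw [hωhat i, ← hgw, hfinv w hwV]
    rw [hw]; exact ⟨hwV, hgw⟩
  -- linear algebra: rewriting the weighted sums via the dot product
  have hlin : ∀ w : Fin N → ℝ,
      ∑ i, (δ i * w i) * (lam ⬝ᵥ z i) = lam ⬝ᵥ (∑ i, (δ i * w i) • z i) := by
    intro w
    simp only [dotProduct, Finset.sum_apply, Pi.smul_apply, smul_eq_mul,
      Finset.mul_sum, Finset.sum_mul]
    rw [Finset.sum_comm]
    exact Finset.sum_congr rfl fun i _ => Finset.sum_congr rfl fun j _ => by ring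
  -- the linear correction term vanishes
  have hzero : ∑ i, δ i * g (ωhat i) * (q i)⁻¹ * (ω i - ωhat i) = 0 := by
    have hterm : ∀ i, δ i * g (ωhat i) * (q i)⁻¹ * (ω i - ωhat i)
        = (δ i * ω i) * (lam ⬝ᵥ z i) - (δ i * ωhat i) * (lam ⬝ᵥ z i) := by
      intro i
      rcases hδ i with h | h
      · simp [h]
      · rw [(hhat i h).2]
        field_simp [(hq i).ne']
    rw [Finset.sum_congr rfl fun i _ => hterm i, Finset.sum_sub_distrib,
      hlin ω, hlin ωhat, hcalω, hcal, sub_self]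
  -- pointwise tangent inequality (weak version)
  have hle : ∀ i, δ i * G (ωhat i) * (q i)⁻¹ + δ i * g (ωhat i) * (q i)⁻¹ * (ω i - ωhat i)
      ≤ δ i * G (ω i) * (q i)⁻¹ := by
    intro i
    rcases hδ i with h | h
    · simp [h]
    · rcases eq_or_ne (ω i) (ωhat i) with he | he
      · rw [he]; ring_nf; exact le_refl _
      · have ht := tangent_lt hconv hderiv (hhat i h).1 (hωV i h) he
        have hqi := (hq i).le
        have hqinv : (0:ℝ) < (q i)⁻¹ := inv_pos.2 (hq i)
        rw [h]
        nlinarith [mul_lt_mul_of_pos_right ht hqinv]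
  -- pointwise strict inequality on respondents with differing weights
  have hlt : ∀ i, δ i = 1 → ω i ≠ ωhat i →
      δ i * G (ωhat i) * (q i)⁻¹ + δ i * g (ωhat i) * (q i)⁻¹ * (ω i - ωhat i)
      < δ i * G (ω i) * (q i)⁻¹ := by
    intro i h he
    have ht := tangent_lt hconv hderiv (hhat i h).1 (hωV i h) he
    have hqinv : (0:ℝ) < (q i)⁻¹ := inv_pos.2 (hq i)
    rw [h]
    nlinarith [mul_lt_mul_of_pos_right ht hqinv]
  -- key summed inequality
  have hsum : ∑ i, δ i * G (ωhat i) * (q i)⁻¹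
      ≤ ∑ i, δ i * G (ω i) * (q i)⁻¹ := by
    have := Finset.sum_le_sum (s := Finset.univ)
      (fun i _ => hle i)
    rw [Finset.sum_add_distrib, hzero, add_zero] at this
    exact this
  refine ⟨hsum, ?_, ?_⟩
  · -- equality implies equal weights on respondents
    intro heq
    by_contra hcon
    push_neg at hcon
    obtain ⟨i0, hi0, hne0⟩ := hcon
    have hstrict : ∑ i, (δ i * G (ωhat i) * (q i)⁻¹
          + δ i * g (ωhat i) * (q i)⁻¹ * (ω i - ωhat i))
        < ∑ i, δ i * G (ω i) * (q i)⁻¹ := by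
      refine Finset.sum_lt_sum (fun i _ => hle i) ⟨i0, Finset.mem_univ i0, hlt i0 hi0 hne0⟩
    rw [Finset.sum_add_distrib, hzero, add_zero, heq] at hstrict
    exact lt_irrefl _ hstrict
  · -- equal weights imply equal objective values
    intro hall
    refine Finset.sum_congr rfl fun i _ => ?_
    rcases hδ i with h | h
    · simp [h]
    · rw [hall i h]
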